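/- For all nonempty finite simple graphs G and H, the Lusternik–Schnirelmann category of the strong (Shannon) product satisfies cat(G * H) ≤ cat(G) · cat(H). -/

import Mathlib

open Finset
open scoped Classical

/-- Contractibility of the subgraph of `G` induced on the vertex set `A`. -/
inductive IsContractible {V : Type*} (G : SimpleGraph V) : Finset V → Prop
  | single (v : V) : IsContractible G {v}
  | step {A : Finset V} (v : V) (hv : v ∈ A)
      (hS : IsContractible G (A.filter (fun w => G.Adj v w)))
      (hrest : IsContractible G (A.erase v)) : IsContractible G A

/-- The Lusternik–Schnirelmann category of `G`: the minimal number `k` of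
contractible subgraphs `U_1, …, U_k` of `G` covering all vertices and all
edges of `G`. -/
noncomputable def lsCat {V : Type*} [Fintype V] (G : SimpleGraph V) : ℕ :=
  sInf {k : ℕ | ∃ U : Fin k → G.Subgraph,
    (∀ j, IsContractible (U j).spanningCoe (U j).verts.toFinset) ∧
    (∀ v : V, ∃ j, v ∈ (U j).verts) ∧
    (∀ v w : V, G.Adj v w → ∃ j, (U j).Adj v w)}

/-- The strong (Shannon) product of two finite simple graphs: two distinct
pairs are adjacent iff each coordinate is equal or adjacent. -/
def strongProd {V W : Type*} (G : SimpleGraph V) (H : SimpleGraph W) :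
    SimpleGraph (V × W) where
  Adj p q := p ≠ q ∧ (p.1 = q.1 ∨ G.Adj p.1 q.1) ∧ (p.2 = q.2 ∨ H.Adj p.2 q.2)
  symm := by
    constructor
    rintro p q ⟨hne, h1, h2⟩
    refine ⟨hne.symm, ?_, ?_⟩
    · rcases h1 with h | h
      · exact Or.inl h.symm
      · exact Or.inr h.symm
    · rcases h2 with h | h
      · exact Or.inl h.symm
      · exact Or.inr h.symm
  loopless := by
    constructor
    rintro p ⟨hne, _, _⟩
    exact hne rfl

lemma strongProd_adj {V W : Type*} {G : SimpleGraph V} {H : SimpleGraph W} {p q : V × W} :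
    (strongProd G H).Adj p q ↔ p ≠ q ∧ (p.1 = q.1 ∨ G.Adj p.1 q.1) ∧ (p.2 = q.2 ∨ H.Adj p.2 q.2) :=
  Iff.rfl

lemma ctr_nonempty {V : Type*} {G : SimpleGraph V} {A : Finset V}
    (h : IsContractible G A) : A.Nonempty := by
  induction h with
  | single v => exact ⟨v, mem_singleton_self v⟩
  | step v hv _ _ _ _ => exact ⟨v, hv⟩

lemma ctr_congr {V : Type*} {G₁ G₂ : SimpleGraph V} {A : Finset V}
    (h : IsContractible G₁ A)
    (he : ∀ x ∈ A, ∀ y ∈ A, G₁.Adj x y ↔ G₂.Adj x y) : IsContractible G₂ A := by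
  induction h with
  | single v => exact .single v
  | @step A v hv hS hrest ihS ihrest =>
    refine IsContractible.step v hv ?_ ?_
    · have hEq : A.filter (fun w => G₂.Adj v w) = A.filter (fun w => G₁.Adj v w) := by
        ext w
        simp only [mem_filter, and_congr_right_iff]
        intro hw
        exact (he v hv w hw).symm
      rw [hEq]
      exact ihS fun x hx y hy =>
        he x (filter_subset _ _ hx) y (filter_subset _ _ hy)
    · exact ihrest fun x hx y hy => he x (erase_subset _ _ hx) y (erase_subset _ _ hy)

lemma ctr_of_mem {V : Type*} {G : SimpleGraph V} {A B : Finset V}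
    (h : IsContractible G A) (e : ∀ x, x ∈ B ↔ x ∈ A) : IsContractible G B := by
  have hBA : B = A := Finset.ext e
  rw [hBA]; exact h

lemma ctr_cone {V : Type*} (G : SimpleGraph V) :
    ∀ (D : Finset V) (c : V), c ∈ D → (∀ x ∈ D.erase c, G.Adj c x) → IsContractible G D := by
  intro D
  induction D using Finset.strongInductionOn with
  | _ D ih =>
    intro c hc h
    by_cases hD : D = {c}
    · subst hD; exact .single c
    · have hne : ∃ x ∈ D, x ≠ c := by
        by_contra hcon
        push_neg at hcon
        exact hD (Finset.eq_singleton_iff_unique_mem.2 ⟨hc, hcon⟩)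
      obtain ⟨x, hxD, hxc⟩ := hne
      have hadjcx : G.Adj c x := h x (mem_erase.2 ⟨hxc, hxD⟩)
      refine IsContractible.step x hxD ?_ ?_
      · refine ih _ ?_ c ?_ ?_
        · refine (Finset.ssubset_iff_of_subset (filter_subset _ _)).2 ⟨x, hxD, ?_⟩
          simp [G.irrefl]
        · exact mem_filter.2 ⟨hc, hadjcx.symm⟩
        · intro y hy
          obtain ⟨hyc, hyf⟩ := mem_erase.1 hy
          exact h y (mem_erase.2 ⟨hyc, mem_of_mem_filter _ hyf⟩)
      · refine ih _ (Finset.erase_ssubset hxD) c (mem_erase.2 ⟨Ne.symm hxc, hc⟩) ?_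
        intro y hy
        obtain ⟨hyc, hyf⟩ := mem_erase.1 hy
        exact h y (mem_erase.2 ⟨hyc, mem_of_mem_erase hyf⟩)

lemma ctr_fiber {V W : Type*} (G : SimpleGraph V) {H : SimpleGraph W} (v : V)
    {B : Finset W} (hB : IsContractible H B) :
    IsContractible (strongProd G H) ({v} ×ˢ B) := by
  induction hB with
  | single w =>
    have : ({v} : Finset V) ×ˢ ({w} : Finset W) = {(v, w)} := by
      ext ⟨x, y⟩; simp [Prod.ext_iff]
    rw [this]; exact .single (v, w)
  | @step B w hw hS hrest ihS ihrest =>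
    refine IsContractible.step (v, w) (by simp [hw]) ?_ ?_
    · have h1 : (({v} : Finset V) ×ˢ B).filter (fun q => (strongProd G H).Adj (v, w) q)
          = {v} ×ˢ (B.filter (fun y => H.Adj w y)) := by
        ext ⟨x, y⟩
        simp only [mem_filter, mem_product, mem_singleton, strongProd_adj, Ne, Prod.ext_iff]
        constructor
        · rintro ⟨⟨hx, hy⟩, hne, -, (h | h)⟩
          · exact absurd ⟨hx.symm, h⟩ hne
          · exact ⟨hx, hy, h⟩
        · rintro ⟨hx, hy, hadj⟩
          exact ⟨⟨hx, hy⟩, fun h => H.ne_of_adj hadj h.2, Or.inl hx.symm, Or.inr hadj⟩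
      rw [h1]; exact ihS
    · refine ctr_of_mem ihrest fun ⟨x, y⟩ => ?_
      simp only [mem_erase, mem_product, mem_singleton, Ne, Prod.ext_iff]
      tauto

lemma ctr_R {V W : Type*} {G : SimpleGraph V} {H : SimpleGraph W}
    {S : Finset V} {a : V} (haS : ∀ s ∈ S, G.Adj a s) {c : W} {M₀ : Finset W}
    (hP : ∀ M : Finset W, M ⊆ M₀ → c ∈ M → (∀ y ∈ M.erase c, H.Adj c y) →
        IsContractible (strongProd G H) (S ×ˢ M)) :
    ∀ (T : Finset W), IsContractible H T → ∀ (M : Finset W), M ⊆ M₀ → c ∈ M →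
      (∀ y ∈ M.erase c, H.Adj c y) → T ⊆ M.erase c →
      IsContractible (strongProd G H) (S ×ˢ M ∪ {a} ×ˢ T) := by
  have haS' : a ∉ S := fun h => G.irrefl (haS a h)
  intro T hT
  induction hT with
  | single t =>
    intro M hM hc hcone hTM
    have htM : t ∈ M.erase c := hTM (mem_singleton_self t)
    have hct : H.Adj c t := hcone t htM
    refine IsContractible.step (a, t) (by simp) ?_ ?_
    · refine ctr_of_mem (hP (M.filter (fun y => y = t ∨ H.Adj t y))
        ((filter_subset _ _).trans hM) (mem_filter.2 ⟨hc, Or.inr hct.symm⟩) ?_)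
        fun ⟨x, y⟩ => ?_
      · intro y hy
        obtain ⟨hyc, hyM⟩ := mem_erase.1 hy
        exact hcone y (mem_erase.2 ⟨hyc, mem_of_mem_filter _ hyM⟩)
      · simp only [mem_filter, mem_union, mem_product, mem_singleton, strongProd_adj, Ne,
          Prod.ext_iff]
        constructor
        · rintro ⟨(⟨hx, hy⟩ | ⟨hx, hy⟩), hne, h1, h2⟩
          · refine ⟨hx, hy, ?_⟩
            rcases h2 with h | h
            · exact Or.inl h.symm
            · exact Or.inr h
          · exact absurd ⟨hx.symm, hy.symm⟩ hne
        · rintro ⟨hx, hy, hyt⟩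
          refine ⟨Or.inl ⟨hx, hy⟩, fun h => haS' (h.1 ▸ hx), Or.inr (haS x hx), ?_⟩
          rcases hyt with h | h
          · exact Or.inl h.symm
          · exact Or.inr h
    · refine ctr_of_mem (hP M hM hc hcone) fun ⟨x, y⟩ => ?_
      simp only [mem_erase, mem_union, mem_product, mem_singleton, Ne, Prod.ext_iff]
      constructor
      · rintro ⟨hne, (⟨hx, hy⟩ | ⟨hx, hy⟩)⟩
        · exact ⟨hx, hy⟩
        · exact absurd ⟨hx, hy⟩ hne
      · rintro ⟨hx, hy⟩
        exact ⟨fun h => haS' (h.1 ▸ hx), Or.inl ⟨hx, hy⟩⟩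
  | @step T t ht h1 h2 ih1 ih2 =>
    intro M hM hc hcone hTM
    have htM : t ∈ M.erase c := hTM ht
    have htc : t ≠ c := (mem_erase.1 htM).1
    have hct : H.Adj c t := hcone t htM
    have hM' : M.filter (fun y => y = t ∨ H.Adj t y) ⊆ M₀ := (filter_subset _ _).trans hM
    have hc' : c ∈ M.filter (fun y => y = t ∨ H.Adj t y) :=
      mem_filter.2 ⟨hc, Or.inr hct.symm⟩
    have hcone' : ∀ y ∈ (M.filter (fun y => y = t ∨ H.Adj t y)).erase c, H.Adj c y := by
      intro y hy
      obtain ⟨hyc, hyM⟩ := mem_erase.1 hy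
      exact hcone y (mem_erase.2 ⟨hyc, mem_of_mem_filter _ hyM⟩)
    have hT' : T.filter (fun w => H.Adj t w) ⊆ (M.filter (fun y => y = t ∨ H.Adj t y)).erase c := by
      intro y hy
      obtain ⟨hyT, hyt⟩ := mem_filter.1 hy
      have hyMc := hTM hyT
      exact mem_erase.2 ⟨(mem_erase.1 hyMc).1,
        mem_filter.2 ⟨(mem_erase.1 hyMc).2, Or.inr hyt⟩⟩
    refine IsContractible.step (a, t) (by simp [ht]) ?_ ?_
    · refine ctr_of_mem (ih1 _ hM' hc' hcone' hT') fun ⟨x, y⟩ => ?_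
      simp only [mem_filter, mem_union, mem_product, mem_singleton, strongProd_adj, Ne,
        Prod.ext_iff]
      constructor
      · rintro ⟨(⟨hx, hy⟩ | ⟨hx, hy⟩), hne, hfst, hsnd⟩
        · refine Or.inl ⟨hx, hy, ?_⟩
          rcases hsnd with h | h
          · exact Or.inl h.symm
          · exact Or.inr h
        · rcases hsnd with h | h
          · exact absurd ⟨hx.symm, h⟩ hne
          · exact Or.inr ⟨hx, hy, h⟩
      · rintro (⟨hx, hy, hyt⟩ | ⟨hx, hy, hAdj⟩)
        · refine ⟨Or.inl ⟨hx, hy⟩, fun h => haS' (h.1 ▸ hx), Or.inr (haS x hx), ?_⟩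
          rcases hyt with h | h
          · exact Or.inl h.symm
          · exact Or.inr h
        · exact ⟨Or.inr ⟨hx, hy⟩, fun h => H.ne_of_adj hAdj h.2, Or.inl hx.symm, Or.inr hAdj⟩
    · refine ctr_of_mem (ih2 M hM hc hcone ((erase_subset _ _).trans hTM)) fun ⟨x, y⟩ => ?_
      simp only [mem_erase, mem_union, mem_product, mem_singleton, Ne, Prod.ext_iff]
      constructor
      · rintro ⟨hne, (⟨hx, hy⟩ | ⟨hx, hy⟩)⟩
        · exact Or.inl ⟨hx, hy⟩
        · exact Or.inr ⟨hx, fun hyt => hne ⟨hx, hyt⟩, hy⟩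
      · rintro (⟨hx, hy⟩ | ⟨hx, hyt, hy⟩)
        · exact ⟨fun h => haS' (h.1 ▸ hx), Or.inl ⟨hx, hy⟩⟩
        · exact ⟨fun h => hyt h.2, Or.inr ⟨hx, hy⟩⟩

lemma ctr_prod_aux {V W : Type*} {G : SimpleGraph V} {H : SimpleGraph W} :
    ∀ (n : ℕ) (A : Finset V) (B : Finset W), A.card + B.card ≤ n →
      IsContractible G A → IsContractible H B →
      IsContractible (strongProd G H) (A ×ˢ B) := by
  intro n
  induction n with
  | zero =>
    intro A B hn hA hB
    have h1 := Finset.card_pos.2 (ctr_nonempty hA)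
    have h2 := Finset.card_pos.2 (ctr_nonempty hB)
    omega
  | succ n ih =>
    intro A B hn hA hB
    cases hA with
    | single v => exact ctr_fiber G v hB
    | @step A v hv hS hrest =>
      have hAe : (A.erase v).card = A.card - 1 := card_erase_of_mem hv
      have hA1 : 1 ≤ A.card := card_pos.2 ⟨v, hv⟩
      have hfilsub : A.filter (fun w => G.Adj v w) ⊆ A.erase v := by
        intro x hx
        obtain ⟨hxA, hadj⟩ := mem_filter.1 hx
        exact mem_erase.2 ⟨fun h => G.irrefl (h ▸ hadj), hxA⟩
      have hfilcard : (A.filter (fun w => G.Adj v w)).card ≤ A.card - 1 :=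
        hAe ▸ card_le_card hfilsub
      have haS : ∀ s ∈ A.filter (fun w => G.Adj v w), G.Adj v s :=
        fun s hs => (mem_filter.1 hs).2
      have hPgen : ∀ M : Finset W, M ⊆ B → IsContractible H M →
          IsContractible (strongProd G H) ((A.filter (fun w => G.Adj v w)) ×ˢ M) := by
        intro M hM hMc
        refine ih _ M ?_ hS hMc
        have := card_le_card hM
        omega
      have F : ∀ (T : Finset W), IsContractible H T → T ⊆ B →
          IsContractible (strongProd G H) ((A.erase v) ×ˢ B ∪ {v} ×ˢ T) := by
        intro T hT
        induction hT with
        | single w =>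
          intro hsub
          have hwB : w ∈ B := hsub (mem_singleton_self w)
          refine IsContractible.step (v, w) (by simp) ?_ ?_
          · refine ctr_of_mem (hPgen (B.filter (fun y => y = w ∨ H.Adj w y))
              (filter_subset _ _)
              (ctr_cone H _ w (mem_filter.2 ⟨hwB, Or.inl rfl⟩) ?_)) fun ⟨x, y⟩ => ?_
            · intro y hy
              obtain ⟨hyw, hyf⟩ := mem_erase.1 hy
              rcases (mem_filter.1 hyf).2 with h | h
              · exact absurd h hyw
              · exact h
            · simp only [mem_filter, mem_union, mem_product, mem_singleton, mem_erase,
                strongProd_adj, Ne, Prod.ext_iff]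
              constructor
              · rintro ⟨(⟨⟨hxv, hxA⟩, hy⟩ | ⟨hx, hy⟩), hne, hfst, hsnd⟩
                · refine ⟨⟨hxA, ?_⟩, hy, ?_⟩
                  · rcases hfst with h | h
                    · exact absurd h.symm hxv
                    · exact h
                  · rcases hsnd with h | h
                    · exact Or.inl h.symm
                    · exact Or.inr h
                · exact absurd ⟨hx.symm, hy.symm⟩ hne
              · rintro ⟨⟨hxA, hAdj⟩, hy, hyw⟩
                refine ⟨Or.inl ⟨⟨(G.ne_of_adj hAdj).symm, hxA⟩, hy⟩,
                  fun h => G.ne_of_adj hAdj h.1, Or.inr hAdj, ?_⟩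
                rcases hyw with h | h
                · exact Or.inl h.symm
                · exact Or.inr h
          · refine ctr_of_mem (ih (A.erase v) B (by omega) hrest hB) fun ⟨x, y⟩ => ?_
            simp only [mem_erase, mem_union, mem_product, mem_singleton, Ne, Prod.ext_iff]
            constructor
            · rintro ⟨hne, (⟨hx, hy⟩ | ⟨hx, hy⟩)⟩
              · exact ⟨hx, hy⟩
              · exact absurd ⟨hx, hy⟩ hne
            · rintro ⟨⟨hxv, hxA⟩, hy⟩
              exact ⟨fun h => hxv h.1, Or.inl ⟨⟨hxv, hxA⟩, hy⟩⟩
        | @step T w hw h1 h2 ih1 ih2 =>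
          intro hsub
          have hwB : w ∈ B := hsub hw
          refine IsContractible.step (v, w) (by simp [hw]) ?_ ?_
          · refine ctr_of_mem (ctr_R haS
              (fun M hM hc hcone => hPgen M hM (ctr_cone H M w hc hcone))
              (T.filter (fun y => H.Adj w y)) h1
              (B.filter (fun y => y = w ∨ H.Adj w y)) (filter_subset _ _)
              (mem_filter.2 ⟨hwB, Or.inl rfl⟩) ?_ ?_) fun ⟨x, y⟩ => ?_
            · intro y hy
              obtain ⟨hyw, hyf⟩ := mem_erase.1 hy
              rcases (mem_filter.1 hyf).2 with h | h
              · exact absurd h hyw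
              · exact h
            · intro y hy
              obtain ⟨hyT, hAdj⟩ := mem_filter.1 hy
              exact mem_erase.2 ⟨H.ne_of_adj hAdj ∘ Eq.symm,
                mem_filter.2 ⟨hsub hyT, Or.inr hAdj⟩⟩
            · simp only [mem_filter, mem_union, mem_product, mem_singleton, mem_erase,
                strongProd_adj, Ne, Prod.ext_iff]
              constructor
              · rintro ⟨(⟨⟨hxv, hxA⟩, hy⟩ | ⟨hx, hy⟩), hne, hfst, hsnd⟩
                · refine Or.inl ⟨⟨hxA, ?_⟩, hy, ?_⟩
                  · rcases hfst with h | h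
                    · exact absurd h.symm hxv
                    · exact h
                  · rcases hsnd with h | h
                    · exact Or.inl h.symm
                    · exact Or.inr h
                · rcases hsnd with h | h
                  · exact absurd ⟨hx.symm, h⟩ hne
                  · exact Or.inr ⟨hx, hy, h⟩
              · rintro (⟨⟨hxA, hAdj⟩, hy, hyw⟩ | ⟨hx, hy, hAdj⟩)
                · refine ⟨Or.inl ⟨⟨(G.ne_of_adj hAdj).symm, hxA⟩, hy⟩,
                    fun h => G.ne_of_adj hAdj h.1, Or.inr hAdj, ?_⟩
                  rcases hyw with h | h
                  · exact Or.inl h.symm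
                  · exact Or.inr h
                · exact ⟨Or.inr ⟨hx, hy⟩, fun h => H.ne_of_adj hAdj h.2,
                    Or.inl hx.symm, Or.inr hAdj⟩
          · refine ctr_of_mem (ih2 ((erase_subset _ _).trans hsub)) fun ⟨x, y⟩ => ?_
            simp only [mem_erase, mem_union, mem_product, mem_singleton, Ne, Prod.ext_iff]
            constructor
            · rintro ⟨hne, (⟨hx, hy⟩ | ⟨hx, hy⟩)⟩
              · exact Or.inl ⟨hx, hy⟩
              · exact Or.inr ⟨hx, fun hyw => hne ⟨hx, hyw⟩, hy⟩
            · rintro (⟨⟨hxv, hxA⟩, hy⟩ | ⟨hx, hyw, hy⟩)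
              · exact ⟨fun h => hxv h.1, Or.inl ⟨⟨hxv, hxA⟩, hy⟩⟩
              · exact ⟨fun h => hyw h.2, Or.inr ⟨hx, hy⟩⟩
      refine ctr_of_mem (F B hB (Finset.Subset.refl B)) fun ⟨x, y⟩ => ?_
      simp only [mem_union, mem_product, mem_singleton, mem_erase]
      constructor
      · rintro ⟨hx, hy⟩
        by_cases hxv : x = v
        · exact Or.inr ⟨hxv, hy⟩
        · exact Or.inl ⟨⟨hxv, hx⟩, hy⟩
      · rintro (⟨⟨hxv, hx⟩, hy⟩ | ⟨hx, hy⟩)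
        · exact ⟨hx, hy⟩
        · exact ⟨hx ▸ hv, hy⟩

lemma ctr_prod {V W : Type*} {G : SimpleGraph V} {H : SimpleGraph W}
    {A : Finset V} {B : Finset W} (hA : IsContractible G A) (hB : IsContractible H B) :
    IsContractible (strongProd G H) (A ×ˢ B) :=
  ctr_prod_aux (A.card + B.card) A B le_rfl hA hB

def vertSub {V : Type*} (G : SimpleGraph V) (v : V) : G.Subgraph where
  verts := {v}
  Adj _ _ := False
  adj_sub := False.elim
  edge_vert := False.elim
  symm := ⟨fun _ _ h => h⟩

def edgeSub {V : Type*} (G : SimpleGraph V) {v w : V} (h : G.Adj v w) : G.Subgraph where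
  verts := {v, w}
  Adj a b := (a = v ∧ b = w) ∨ (a = w ∧ b = v)
  adj_sub := by rintro a b (⟨rfl, rfl⟩ | ⟨rfl, rfl⟩) <;> [exact h; exact h.symm]
  edge_vert := by rintro a b (⟨rfl, -⟩ | ⟨rfl, -⟩) <;> simp
  symm := ⟨by rintro a b (⟨rfl, rfl⟩ | ⟨rfl, rfl⟩) <;> [right; left] <;> exact ⟨rfl, rfl⟩⟩

lemma lsCat_set_nonempty {V : Type*} [Fintype V] (G : SimpleGraph V) :
    {k : ℕ | ∃ U : Fin k → G.Subgraph,
      (∀ j, IsContractible (U j).spanningCoe (U j).verts.toFinset) ∧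
      (∀ v : V, ∃ j, v ∈ (U j).verts) ∧
      (∀ v w : V, G.Adj v w → ∃ j, (U j).Adj v w)}.Nonempty := by
  classical
  refine ⟨Fintype.card (V × V), fun i =>
    (fun p : V × V => if h : G.Adj p.1 p.2 then edgeSub G h else vertSub G p.1)
      ((Fintype.equivFin (V × V)).symm i), ?_, ?_, ?_⟩
  · intro j
    beta_reduce
    set p := (Fintype.equivFin (V × V)).symm j
    by_cases h : G.Adj p.1 p.2
    · rw [dif_pos h]
      refine IsContractible.step p.1 (by rw [Set.mem_toFinset]; simp [edgeSub]) ?_ ?_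
      · refine ctr_of_mem (.single p.2) fun x => ?_
        simp only [mem_filter, mem_singleton, Set.mem_toFinset]
        constructor
        · rintro ⟨-, hadj⟩
          rcases hadj with ⟨-, rfl⟩ | ⟨h1, -⟩
          · rfl
          · exact absurd h1 (G.ne_of_adj h)
        · rintro rfl
          refine ⟨?_, Or.inl ⟨rfl, rfl⟩⟩
          show p.2 ∈ ({p.1, p.2} : Set V)
          simp
      · refine ctr_of_mem (.single p.2) fun x => ?_
        simp only [mem_erase, mem_singleton, Set.mem_toFinset]
        constructor
        · rintro ⟨hne, hx⟩
          rcases hx with rfl | rfl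
          · exact absurd rfl hne
          · rfl
        · rintro rfl
          exact ⟨(G.ne_of_adj h).symm ∘ Eq.symm ∘ Eq.symm, Or.inr rfl⟩
    · rw [dif_neg h]
      refine ctr_of_mem (.single p.1) fun x => ?_
      rw [Set.mem_toFinset]
      simp [vertSub]
  · intro v
    refine ⟨Fintype.equivFin (V × V) (v, v), ?_⟩
    simp only [Equiv.symm_apply_apply]
    rw [dif_neg (G.irrefl)]
    exact rfl
  · intro v w hvw
    refine ⟨Fintype.equivFin (V × V) (v, w), ?_⟩
    simp only [Equiv.symm_apply_apply]
    rw [dif_pos hvw]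
    exact Or.inl ⟨rfl, rfl⟩

lemma lsCat_spec {V : Type*} [Fintype V] (G : SimpleGraph V) :
    ∃ U : Fin (lsCat G) → G.Subgraph,
      (∀ j, IsContractible (U j).spanningCoe (U j).verts.toFinset) ∧
      (∀ v : V, ∃ j, v ∈ (U j).verts) ∧
      (∀ v w : V, G.Adj v w → ∃ j, (U j).Adj v w) :=
  Nat.sInf_mem (lsCat_set_nonempty G)

def prodSub {V W : Type*} {G : SimpleGraph V} {H : SimpleGraph W}
    (U : G.Subgraph) (T : H.Subgraph) : (strongProd G H).Subgraph where
  verts := U.verts ×ˢ T.verts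
  Adj p q := (p.1 ∈ U.verts ∧ p.2 ∈ T.verts) ∧ (q.1 ∈ U.verts ∧ q.2 ∈ T.verts) ∧
    p ≠ q ∧ (p.1 = q.1 ∨ U.Adj p.1 q.1) ∧ (p.2 = q.2 ∨ T.Adj p.2 q.2)
  adj_sub := fun h =>
    ⟨h.2.2.1, h.2.2.2.1.imp id U.adj_sub, h.2.2.2.2.imp id T.adj_sub⟩
  edge_vert := fun h => ⟨h.1.1, h.1.2⟩
  symm := by
    constructor
    rintro p q ⟨hp, hq, hne, h1, h2⟩
    exact ⟨hq, hp, hne.symm, h1.imp Eq.symm SimpleGraph.Subgraph.Adj.symm,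
      h2.imp Eq.symm SimpleGraph.Subgraph.Adj.symm⟩

lemma prodSub_ctr {V W : Type*} {G : SimpleGraph V} {H : SimpleGraph W}
    [Fintype V] [Fintype W] {U : G.Subgraph} {T : H.Subgraph}
    (hU : IsContractible U.spanningCoe U.verts.toFinset)
    (hT : IsContractible T.spanningCoe T.verts.toFinset) :
    IsContractible (prodSub U T).spanningCoe (prodSub U T).verts.toFinset := by
  have h1 : IsContractible (strongProd U.spanningCoe T.spanningCoe)
      (U.verts.toFinset ×ˢ T.verts.toFinset) := ctr_prod hU hT
  have h2 : IsContractible (prodSub U T).spanningCoe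
      (U.verts.toFinset ×ˢ T.verts.toFinset) := by
    refine ctr_congr h1 ?_
    rintro ⟨x1, x2⟩ hx ⟨y1, y2⟩ hy
    obtain ⟨hx1, hx2⟩ := mem_product.1 hx
    obtain ⟨hy1, hy2⟩ := mem_product.1 hy
    rw [Set.mem_toFinset] at hx1 hx2 hy1 hy2
    simp only [strongProd_adj, SimpleGraph.Subgraph.spanningCoe_adj]
    show _ ↔ (prodSub U T).Adj _ _
    unfold prodSub
    constructor
    · rintro ⟨hne, hf, hs⟩
      exact ⟨⟨hx1, hx2⟩, ⟨hy1, hy2⟩, hne, hf, hs⟩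
    · rintro ⟨-, -, hne, hf, hs⟩
      exact ⟨hne, hf, hs⟩
  refine ctr_of_mem h2 fun ⟨x1, x2⟩ => ?_
  simp only [Set.mem_toFinset, mem_product]
  show (x1, x2) ∈ (U.verts ×ˢ T.verts : Set (V × W)) ↔ _
  simp [Set.mem_prod, Set.mem_toFinset]

/-- For nonempty graphs, the Lusternik–Schnirelmann category of the strong
(Shannon) product satisfies `cat(G * H) ≤ cat(G) · cat(H)`. -/
theorem lsCat_strongProd_le {V W : Type*} [Fintype V] [Fintype W]
    (G : SimpleGraph V) (H : SimpleGraph W) (hV : Nonempty V) (hW : Nonempty W) :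
    lsCat (strongProd G H) ≤ lsCat G * lsCat H := by
  obtain ⟨U, hU1, hU2, hU3⟩ := lsCat_spec G
  obtain ⟨T, hT1, hT2, hT3⟩ := lsCat_spec H
  have hmem : lsCat G * lsCat H ∈ {k : ℕ | ∃ U' : Fin k → (strongProd G H).Subgraph,
      (∀ j, IsContractible (U' j).spanningCoe (U' j).verts.toFinset) ∧
      (∀ v : V × W, ∃ j, v ∈ (U' j).verts) ∧
      (∀ v w : V × W, (strongProd G H).Adj v w → ∃ j, (U' j).Adj v w)} := by
    refine ⟨fun i => prodSub (U (finProdFinEquiv.symm i).1) (T (finProdFinEquiv.symm i).2),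
      fun j => prodSub_ctr (hU1 _) (hT1 _), ?_, ?_⟩
    · rintro ⟨v, w⟩
      obtain ⟨i, hi⟩ := hU2 v
      obtain ⟨j, hj⟩ := hT2 w
      refine ⟨finProdFinEquiv (i, j), ?_⟩
      simp only [Equiv.symm_apply_apply]
      exact ⟨hi, hj⟩
    · rintro ⟨v1, v2⟩ ⟨w1, w2⟩ hadj
      obtain ⟨hne, h1, h2⟩ := strongProd_adj.1 hadj
      dsimp only at h1 h2
      obtain ⟨i, hi1, hi2, hif⟩ :
          ∃ i, v1 ∈ (U i).verts ∧ w1 ∈ (U i).verts ∧ (v1 = w1 ∨ (U i).Adj v1 w1) := by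
        rcases h1 with h | h
        · obtain ⟨i, hi⟩ := hU2 v1
          exact ⟨i, hi, h ▸ hi, Or.inl h⟩
        · obtain ⟨i, hi⟩ := hU3 _ _ h
          exact ⟨i, (U i).edge_vert hi, (U i).edge_vert hi.symm, Or.inr hi⟩
      obtain ⟨j, hj1, hj2, hjf⟩ :
          ∃ j, v2 ∈ (T j).verts ∧ w2 ∈ (T j).verts ∧ (v2 = w2 ∨ (T j).Adj v2 w2) := by
        rcases h2 with h | h
        · obtain ⟨j, hj⟩ := hT2 v2
          exact ⟨j, hj, h ▸ hj, Or.inl h⟩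
        · obtain ⟨j, hj⟩ := hT3 _ _ h
          exact ⟨j, (T j).edge_vert hj, (T j).edge_vert hj.symm, Or.inr hj⟩
      refine ⟨finProdFinEquiv (i, j), ?_⟩
      simp only [Equiv.symm_apply_apply]
      exact ⟨⟨hi1, hj1⟩, ⟨hi2, hj2⟩, hne, hif, hjf⟩
  exact Nat.sInf_le hmem
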